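/- Maximizing mutual information I(X; Y) = H[X] − E[H[X | Y]] over choices of Y does not in general minimize the expected posterior entropy E[H[X | Y]]: there exist random variables X and two observation choices Y1, Y2 such that I(X_{S̄1}; Y1) > I(X_{S̄2}; Y2) for the respective unobserved parts but E[H[X_{S̄1} | Y1]] > E[H[X_{S̄2} | Y2]]. -/

import Mathlib

open Matrix Real

/-- Submatrix of a covariance matrix with rows indexed by `S` and columns by `T`. -/
def covSub {n : ℕ} (M : Matrix (Fin n) (Fin n) ℝ) (S T : Finset (Fin n)) :
    Matrix S T ℝ :=
  M.submatrix (fun i => (i : Fin n)) (fun j => (j : Fin n))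

/-- Posterior (conditional) covariance of the unobserved part `X_{S̄}` given `X_S`
for a Gaussian vector with covariance `M`: the Schur complement. -/
noncomputable def schurCompl {n : ℕ} (M : Matrix (Fin n) (Fin n) ℝ) (S : Finset (Fin n)) :
    Matrix (Sᶜ : Finset (Fin n)) (Sᶜ : Finset (Fin n)) ℝ :=
  covSub M Sᶜ Sᶜ - covSub M Sᶜ S * (covSub M S S)⁻¹ * covSub M S Sᶜ

/-- Prior differential entropy `H[X_{S̄}]` of the unobserved part of a Gaussian vector. -/
noncomputable def priorEnt {n : ℕ} (M : Matrix (Fin n) (Fin n) ℝ) (S : Finset (Fin n)) : ℝ :=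
  Real.log (Real.sqrt ((2 * Real.pi * Real.exp 1) ^ (Sᶜ.card) * (covSub M Sᶜ Sᶜ).det))

/-- Posterior differential entropy `H[X_{S̄} | X_S]` of a Gaussian vector. -/
noncomputable def postEnt {n : ℕ} (M : Matrix (Fin n) (Fin n) ℝ) (S : Finset (Fin n)) : ℝ :=
  Real.log (Real.sqrt ((2 * Real.pi * Real.exp 1) ^ (Sᶜ.card) * (schurCompl M S).det))

/-- Maximizing mutual information `I(X_{S̄}; X_S) = H[X_{S̄}] − H[X_{S̄} | X_S]` does not
in general minimize the expected posterior entropy `H[X_{S̄} | X_S]`: there exists a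
Gaussian vector (a positive definite covariance matrix) and two equal-sized observation
choices `S₁, S₂` such that `S₁` has strictly larger mutual information but also strictly
larger posterior entropy. -/
noncomputable def exM : Matrix (Fin 3) (Fin 3) ℝ := !![1, 1/2, 0; 1/2, 1, 0; 0, 0, 2]

def exA1 : Finset (Fin 3) := {0}
def exA2 : Finset (Fin 3) := {2}

def exE1 : Fin 2 ≃ (exA1ᶜ : Finset (Fin 3)) where
  toFun := ![⟨1, by decide⟩, ⟨2, by decide⟩]
  invFun x := if (x : Fin 3) = 1 then 0 else 1
  left_inv := by decide
  right_inv := by decide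

def exE2 : Fin 2 ≃ (exA2ᶜ : Finset (Fin 3)) where
  toFun := ![⟨0, by decide⟩, ⟨1, by decide⟩]
  invFun x := if (x : Fin 3) = 0 then 0 else 1
  left_inv := by decide
  right_inv := by decide

instance : Unique (exA1 : Finset (Fin 3)) := ⟨⟨⟨0, by decide⟩⟩, by decide⟩

lemma exM_posDef : exM.PosDef := by
  rw [Matrix.posDef_iff_dotProduct_mulVec]
  constructor
  · ext i j; fin_cases i <;> fin_cases j <;> simp [exM]
  · intro x hx
    have h : ∃ i, x i ≠ 0 := by
      by_contra h; push_neg at h; exact hx (funext h)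
    obtain ⟨i, hi⟩ := h
    have e : (star x) ⬝ᵥ exM.mulVec x = (x 0 + x 1/2)^2 + (3/4)*(x 1)^2 + 2*(x 2)^2 := by
      simp [exM, dotProduct, mulVec, Fin.sum_univ_three]
      ring
    rw [e]
    fin_cases i <;> simp at hi <;>
      have := sq_pos_of_ne_zero hi <;>
      nlinarith [sq_nonneg (x 0 + x 1/2), sq_nonneg (x 1), sq_nonneg (x 2), sq_nonneg (x 0 + x 1)]

lemma det_prior1 : (covSub exM exA1ᶜ exA1ᶜ).det = 2 := by
  rw [← Matrix.det_submatrix_equiv_self exE1, Matrix.det_fin_two]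
  simp [covSub, exE1, exM]

lemma det_post1 : (schurCompl exM exA1).det = 3/2 := by
  have hinv : covSub exM exA1 exA1 = 1 := by
    ext i j
    have hij : i = j := Subsingleton.elim i j
    subst hij
    have h0 : (i : Fin 3) = 0 := Finset.mem_singleton.mp i.2
    simp [covSub, h0, exM, Matrix.one_apply]
  have hd : ((default : (exA1 : Finset (Fin 3))) : Fin 3) = 0 := rfl
  rw [schurCompl, hinv, inv_one, Matrix.mul_one, ← Matrix.det_submatrix_equiv_self exE1,
    Matrix.det_fin_two]
  simp [Matrix.mul_apply, covSub, exE1, exM, Fintype.sum_unique, hd]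
  norm_num

lemma det_prior2 : (covSub exM exA2ᶜ exA2ᶜ).det = 3/4 := by
  rw [← Matrix.det_submatrix_equiv_self exE2, Matrix.det_fin_two]
  simp [covSub, exE2, exM]
  norm_num

lemma det_post2 : (schurCompl exM exA2).det = 3/4 := by
  have hz : covSub exM exA2ᶜ exA2 = 0 := by
    ext ⟨i, hi⟩ ⟨j, hj⟩
    have hj2 : j = 2 := Finset.mem_singleton.mp hj
    subst hj2
    fin_cases i <;> simp_all [covSub, exM, exA2] <;> simp_all
  rw [schurCompl, hz, Matrix.zero_mul, Matrix.zero_mul, sub_zero,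
    ← Matrix.det_submatrix_equiv_self exE2, Matrix.det_fin_two]
  simp [covSub, exE2, exM]
  norm_num

lemma log_sqrt_lt (a b : ℝ) (ha : 0 < a) (hab : a < b) :
    Real.log (Real.sqrt ((2*Real.pi*Real.exp 1)^2 * a)) <
      Real.log (Real.sqrt ((2*Real.pi*Real.exp 1)^2 * b)) := by
  have hK : 0 < (2*Real.pi*Real.exp 1)^2 := by positivity
  apply Real.log_lt_log (Real.sqrt_pos.mpr (by positivity))
  exact Real.sqrt_lt_sqrt (by positivity) (by nlinarith)

theorem mutualInfo_not_minimize_posterior_entropy :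
    ∃ (n : ℕ) (M : Matrix (Fin n) (Fin n) ℝ) (_ : M.PosDef)
      (S1 S2 : Finset (Fin n)),
      S1.card = S2.card ∧
      priorEnt M S1 - postEnt M S1 > priorEnt M S2 - postEnt M S2 ∧
      postEnt M S1 > postEnt M S2 := by
  refine ⟨3, exM, exM_posDef, exA1, exA2, by decide, ?_, ?_⟩
  · simp only [priorEnt, postEnt, gt_iff_lt]
    rw [show (exA1ᶜ : Finset (Fin 3)).card = 2 from by decide,
      show (exA2ᶜ : Finset (Fin 3)).card = 2 from by decide,
      det_prior1, det_post1, det_prior2, det_post2]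
    have h1 := log_sqrt_lt (3/2) 2 (by norm_num) (by norm_num)
    linarith
  · simp only [priorEnt, postEnt, gt_iff_lt]
    rw [show (exA1ᶜ : Finset (Fin 3)).card = 2 from by decide,
      show (exA2ᶜ : Finset (Fin 3)).card = 2 from by decide,
      det_post1, det_post2]
    exact log_sqrt_lt (3/4) (3/2) (by norm_num) (by norm_num)
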